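/- The identity Σ_{n≥0} ((xq;q²)_n/(t;q²)_{n+1}) (tq)^n = Σ_{n≥0} (xq;q)_n t^n q^{n(n+1)/2} / (t;q)_{n+1} holds as formal power series in q, t, x. -/

import Mathlib

open Finset

/-- The product (coefficient-wise convergence) topology on formal power series. -/
noncomputable instance : TopologicalSpace (MvPowerSeries (Fin 3) ℚ) :=
  inferInstanceAs (TopologicalSpace ((Fin 3 →₀ ℕ) → ℚ))

/-- The variable `q`. -/
noncomputable def q : MvPowerSeries (Fin 3) ℚ := MvPowerSeries.X 0

/-- The variable `t`. -/
noncomputable def t : MvPowerSeries (Fin 3) ℚ := MvPowerSeries.X 1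

/-- The variable `x`. -/
noncomputable def x : MvPowerSeries (Fin 3) ℚ := MvPowerSeries.X 2

/-- The finite q-Pochhammer symbol `(a; b)_n = ∏_{k=0}^{n-1} (1 - a b^k)`. -/
noncomputable def poch (a b : MvPowerSeries (Fin 3) ℚ) (n : ℕ) : MvPowerSeries (Fin 3) ℚ :=
  ∏ k ∈ range n, (1 - a * b ^ k)

local notation "R" => MvPowerSeries (Fin 3) ℚ
local notation "cf" => @MvPowerSeries.coeff (Fin 3) ℚ _

noncomputable def npoch (a b : R) (n : ℕ) : R := ∏ k ∈ range n, (1 + a * b ^ k)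

noncomputable def G (b : R) : ℕ → ℕ → R
  | _, 0 => 1
  | 0, _ + 1 => 0
  | N + 1, k + 1 => G b N k + b ^ (k + 1) * G b N (k + 1)

@[simp] lemma G_zero_right (b : R) (N : ℕ) : G b N 0 = 1 := by cases N <;> rfl
@[simp] lemma G_zero_succ (b : R) (k : ℕ) : G b 0 (k + 1) = 0 := rfl
lemma G_pascal (b : R) (N k : ℕ) :
    G b (N + 1) (k + 1) = G b N k + b ^ (k + 1) * G b N (k + 1) := rfl

lemma G_eq_zero (b : R) : ∀ N k, N < k → G b N k = 0 := by
  intro N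
  induction N with
  | zero => intro k hk; match k, hk with | k+1, _ => rfl
  | succ N ih =>
    intro k hk
    match k, hk with
    | k+1, hk =>
      rw [G_pascal, ih k (by omega), ih (k+1) (by omega)]
      ring

@[simp] lemma G_self (b : R) (N : ℕ) : G b N N = 1 := by
  induction N with
  | zero => rfl
  | succ N ih => rw [G_pascal, ih, G_eq_zero b N (N+1) (by omega)]; ring

lemma poch_succ (a b : R) (n : ℕ) : poch a b (n + 1) = poch a b n * (1 - a * b ^ n) :=
  prod_range_succ _ n

lemma npoch_succ (a b : R) (n : ℕ) : npoch a b (n + 1) = npoch a b n * (1 + a * b ^ n) :=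
  prod_range_succ _ n

@[simp] lemma poch_zero (a b : R) : poch a b 0 = 1 := rfl
@[simp] lemma npoch_zero (a b : R) : npoch a b 0 = 1 := rfl

/-- product formula: `(b;b)_j (b;b)_{N-j} G(N,j) = (b;b)_N` for `j ≤ N`. -/
lemma G_prod (b : R) : ∀ N, ∀ j ≤ N,
    poch b b j * poch b b (N - j) * G b N j = poch b b N := by
  intro N
  induction N with
  | zero => intro j hj; interval_cases j; simp
  | succ N ih =>
    intro j hj
    rcases Nat.eq_zero_or_pos j with rfl | hj0
    · simp
    rcases Nat.lt_or_ge N j with h | h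
    · have hjN : j = N + 1 := by omega
      subst hjN
      simp
    · obtain ⟨k, rfl⟩ : ∃ k, j = k + 1 := ⟨j - 1, by omega⟩
      have h1 : N + 1 - (k + 1) = (N - (k+1)) + 1 := by omega
      have h2 : N - k = (N - (k+1)) + 1 := by omega
      rw [G_pascal, h1]
      have e1 : poch b b (k+1) = poch b b k * (1 - b * b ^ k) := poch_succ b b k
      have e2 : poch b b ((N - (k+1)) + 1)
          = poch b b (N - (k+1)) * (1 - b * b ^ (N - (k+1))) := poch_succ b b _
      have e3 : poch b b (N+1) = poch b b N * (1 - b * b ^ N) := poch_succ b b N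
      have i1 := ih k (by omega)
      have i2 := ih (k+1) h
      rw [h2] at i1
      rw [e1, e2, e3]
      rw [e2] at i1
      rw [e1] at i2
      have hNk : (k+1) + (N - (k+1)) = N := by omega
      have p1 : b ^ (k+1) * (b * b ^ (N - (k+1))) = b * b ^ N := by
        calc b ^ (k+1) * (b * b ^ (N - (k+1))) = b * (b ^ (k+1) * b ^ (N - (k+1))) := by ring
          _ = b * b ^ N := by rw [← pow_add, hNk]
      linear_combination (1 - b * b ^ k) * i1
        + b ^ (k+1) * (1 - b * b ^ (N - (k+1))) * i2 - poch b b N * p1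

local notation "cC" => @MvPowerSeries.constantCoeff (Fin 3) ℚ _

lemma constC_poch {a : R} (b : R) (ha : cC a = 0) (n : ℕ) : cC (poch a b n) = 1 := by
  unfold poch
  rw [map_prod]
  apply Finset.prod_eq_one
  intro k _
  rw [map_sub, map_one, map_mul, ha, zero_mul, sub_zero]

lemma constC_npoch {a : R} (b : R) (ha : cC a = 0) (n : ℕ) : cC (npoch a b n) = 1 := by
  unfold npoch
  rw [map_prod]
  apply Finset.prod_eq_one
  intro k _
  rw [map_add, map_one, map_mul, ha, zero_mul, add_zero]

lemma isUnit_poch {a : R} (b : R) (ha : cC a = 0) (n : ℕ) : IsUnit (poch a b n) := by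
  rw [MvPowerSeries.isUnit_iff_constantCoeff, constC_poch b ha n]
  exact isUnit_one

lemma isUnit_npoch {a : R} (b : R) (ha : cC a = 0) (n : ℕ) : IsUnit (npoch a b n) := by
  rw [MvPowerSeries.isUnit_iff_constantCoeff, constC_npoch b ha n]
  exact isUnit_one

lemma G_symm {b : R} (hb : cC b = 0) {N j : ℕ} (hj : j ≤ N) : G b N j = G b N (N - j) := by
  have hu : IsUnit (poch b b j * poch b b (N - j)) :=
    (isUnit_poch b hb j).mul (isUnit_poch b hb (N - j))
  apply hu.mul_left_cancel
  have h1 := G_prod b N j hj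
  have h2 := G_prod b N (N - j) (by omega)
  have h3 : N - (N - j) = j := by omega
  rw [h3] at h2
  calc poch b b j * poch b b (N - j) * G b N j = poch b b N := h1
    _ = poch b b (N - j) * poch b b j * G b N (N - j) := h2.symm
    _ = poch b b j * poch b b (N - j) * G b N (N - j) := by ring

lemma G_pascal2 {b : R} (hb : cC b = 0) (N : ℕ) {j : ℕ} (hj1 : 1 ≤ j) (hj : j ≤ N + 1) :
    G b (N + 1) j = G b N j + b ^ (N + 1 - j) * G b N (j - 1) := by
  rcases Nat.lt_or_ge N j with h | h
  · have hjN : j = N + 1 := by omega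
    subst hjN
    rw [G_self, G_eq_zero b N (N+1) (by omega), Nat.sub_self, Nat.add_sub_cancel, G_self]
    ring
  · -- j ≤ N
    have h1 : G b (N + 1) j = G b (N + 1) (N + 1 - j) := G_symm hb (by omega)
    have h2 : N + 1 - j = (N - j) + 1 := by omega
    rw [h1, h2, G_pascal]
    have e3 : N - (N - j) = j := by omega
    have e4 : N - (N - j + 1) = j - 1 := by omega
    have h3 : G b N (N - j) = G b N j := by
      have hx := G_symm hb (N := N) (j := N - j) (by omega)
      rwa [e3] at hx
    have h4 : G b N (N - j + 1) = G b N (j - 1) := by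
      have hx := G_symm hb (N := N) (j := N - j + 1) (by omega)
      rwa [e4] at hx
    rw [h3, h4, ← h2]

lemma G_tri {b : R} (hb : cC b = 0) {N n j : ℕ} (hj : j ≤ n) (hn : n ≤ N) :
    G b N n * G b n j = G b N j * G b (N - j) (n - j) := by
  have hu : IsUnit (poch b b j * poch b b (n - j) * poch b b (N - n)) :=
    (((isUnit_poch b hb j).mul (isUnit_poch b hb (n - j))).mul (isUnit_poch b hb (N - n)))
  apply hu.mul_left_cancel
  have i1 := G_prod b N n hn
  have i2 := G_prod b n j hj
  have i3 := G_prod b N j (le_trans hj hn)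
  have i4 := G_prod b (N - j) (n - j) (by omega)
  have h5 : N - j - (n - j) = N - n := by omega
  rw [h5] at i4
  calc poch b b j * poch b b (n - j) * poch b b (N - n) * (G b N n * G b n j)
      = (poch b b j * poch b b (n - j) * G b n j) * poch b b (N - n) * G b N n := by ring
    _ = poch b b n * poch b b (N - n) * G b N n := by rw [i2]
    _ = poch b b N := i1
    _ = poch b b j * poch b b (N - j) * G b N j := i3.symm
    _ = poch b b j * (poch b b (n - j) * poch b b (N - n) * G b (N - j) (n - j)) * G b N j := by
        rw [i4]
    _ = poch b b j * poch b b (n - j) * poch b b (N - n) * (G b N j * G b (N - j) (n - j)) := by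
        ring

lemma cho1 (m : ℕ) : (m + 1).choose 2 = m.choose 2 + m := by
  rw [Nat.choose_succ_succ]
  simp [Nat.choose_one_right]
  omega

lemma npoch_shift (a b : R) (M : ℕ) : npoch a b (M + 1) = (1 + a) * npoch (a * b) b M := by
  unfold npoch
  rw [prod_range_succ']
  simp only [pow_zero, mul_one]
  rw [mul_comm]
  congr 1
  apply prod_congr rfl
  intro k _
  rw [pow_succ']
  ring

/-- the q-binomial theorem. -/
lemma G_binom (b : R) : ∀ M, ∀ a : R,
    ∑ m ∈ range (M + 1), G b M m * a ^ m * b ^ (m.choose 2) = npoch a b M := by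
  intro M
  induction M with
  | zero => intro a; simp
  | succ M ih =>
    intro a
    rw [sum_range_succ' _ (M + 1)]
    have hsplit : ∀ m ∈ range (M + 1),
        G b (M + 1) (m + 1) * a ^ (m + 1) * b ^ ((m + 1).choose 2)
          = a * (G b M m * (a * b) ^ m * b ^ (m.choose 2))
            + G b M (m + 1) * (a * b) ^ (m + 1) * b ^ ((m + 1).choose 2) := by
      intro m _
      rw [G_pascal, cho1, pow_add]
      ring
    rw [sum_congr rfl hsplit, sum_add_distrib, ← mul_sum, ih (a * b)]
    have h3 := sum_range_succ' (fun m => G b M m * (a * b) ^ m * b ^ (m.choose 2)) (M + 1)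
    rw [sum_range_succ, ih (a * b), G_eq_zero b M (M + 1) (by omega)] at h3
    simp only [zero_mul, add_zero, pow_zero, mul_one, G_zero_right, Nat.choose_zero_succ] at h3
    -- h3 : npoch (a*b) b M = (∑ i ∈ range (M+1), G b M (i+1) * (a*b)^(i+1) * b^((i+1).choose 2)) + 1
    rw [npoch_shift]
    simp only [pow_zero, mul_one, G_zero_right, Nat.choose_zero_succ]
    linear_combination -h3

lemma sum_G_sq {c : R} (hc : cC c = 0) : ∀ M,
    ∑ m ∈ range (M + 1), c ^ m * G (c ^ 2) M m = npoch c c M := by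
  have hc2 : cC (c ^ 2) = 0 := by rw [map_pow, hc]; simp
  intro M
  induction M with
  | zero => simp
  | succ M ih =>
    rw [sum_range_succ' _ (M + 1)]
    have hsplit : ∀ m ∈ range (M + 1),
        c ^ (m + 1) * G (c ^ 2) (M + 1) (m + 1)
          = c ^ (m + 1) * G (c ^ 2) M (m + 1)
            + c ^ (2 * M + 1 - m) * G (c ^ 2) M m := by
      intro m hm
      rw [mem_range] at hm
      rw [G_pascal2 hc2 M (by omega) (by omega)]
      have e1 : (c ^ 2) ^ (M + 1 - (m + 1)) = c ^ (2 * (M - m)) := by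
        rw [← pow_mul]
        congr 1
        omega
      have e2 : c ^ (m + 1) * c ^ (2 * (M - m)) = c ^ (2 * M + 1 - m) := by
        rw [← pow_add]
        congr 1
        omega
      rw [e1, Nat.add_sub_cancel]
      calc c ^ (m+1) * (G (c^2) M (m+1) + c ^ (2*(M-m)) * G (c^2) M m)
          = c ^ (m+1) * G (c^2) M (m+1) + (c ^ (m+1) * c ^ (2*(M-m))) * G (c^2) M m := by ring
        _ = _ := by rw [e2]
    rw [sum_congr rfl hsplit, sum_add_distrib]
    have hA : (∑ m ∈ range (M + 1), c ^ (m + 1) * G (c ^ 2) M (m + 1)) + 1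
        = npoch c c M := by
      have h3 := sum_range_succ' (fun m => c ^ m * G (c ^ 2) M m) (M + 1)
      rw [sum_range_succ, ih, G_eq_zero (c ^ 2) M (M + 1) (by omega)] at h3
      simp only [mul_zero, add_zero, pow_zero, one_mul, G_zero_right] at h3
      linear_combination -h3
    have hB : ∑ m ∈ range (M + 1), c ^ (2 * M + 1 - m) * G (c ^ 2) M m
        = c ^ (M + 1) * ∑ m ∈ range (M + 1), c ^ m * G (c ^ 2) M m := by
      rw [← sum_range_reflect]
      rw [mul_sum]
      apply sum_congr rfl
      intro j hj
      rw [mem_range] at hj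
      have e1 : 2 * M + 1 - (M + 1 - 1 - j) = M + 1 + j := by omega
      have e2 : G (c ^ 2) M (M + 1 - 1 - j) = G (c ^ 2) M j := by
        have hx := G_symm hc2 (N := M) (j := M - j) (by omega)
        have e3 : M - (M - j) = j := by omega
        rw [e3] at hx
        have e4 : M + 1 - 1 - j = M - j := by omega
        rw [e4, ← hx]
      rw [e1, e2, pow_add]
      ring
    simp only [pow_zero, one_mul, G_zero_right]
    rw [hB, ih, npoch_succ]
    linear_combination hA

lemma poch_binom (a b : R) (n : ℕ) :
    poch a b n = ∑ j ∈ range (n + 1), G b n j * (-a) ^ j * b ^ (j.choose 2) := by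
  rw [G_binom b n (-a)]
  unfold poch npoch
  apply prod_congr rfl
  intro k _
  ring

lemma npoch_split (c : R) {N j : ℕ} (hj : j ≤ N) :
    npoch c c N = npoch c c j * npoch (c ^ (j + 1)) c (N - j) := by
  obtain ⟨M, rfl⟩ : ∃ M, N = j + M := ⟨N - j, by omega⟩
  rw [Nat.add_sub_cancel_left]
  unfold npoch
  rw [prod_range_add]
  congr 1
  apply prod_congr rfl
  intro k _
  congr 1
  rw [← pow_succ', ← pow_add]
  congr 1
  omega

lemma poch_sq (b : R) (m : ℕ) :
    poch (b ^ 2) (b ^ 2) m = poch b b m * npoch b b m := by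
  unfold poch npoch
  rw [← prod_mul_distrib]
  apply prod_congr rfl
  intro k _
  have e : (b ^ 2) ^ k = (b ^ k) ^ 2 := by rw [← pow_mul, ← pow_mul, mul_comm]
  rw [e]
  ring

lemma key2 {b : R} (hb : cC b = 0) {N j : ℕ} (hj : j ≤ N) :
    G (b ^ 2) N j * npoch b b (N - j) = G b N j * npoch (b ^ (j + 1)) b (N - j) := by
  have hu : IsUnit (poch b b j * poch b b (N - j) * npoch b b j) :=
    ((isUnit_poch b hb j).mul (isUnit_poch b hb (N - j))).mul (isUnit_npoch b hb j)
  apply hu.mul_left_cancel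
  have h2 := G_prod (b ^ 2) N j hj
  have h1 := G_prod b N j hj
  calc poch b b j * poch b b (N - j) * npoch b b j * (G (b ^ 2) N j * npoch b b (N - j))
      = (poch b b j * npoch b b j) * (poch b b (N - j) * npoch b b (N - j)) * G (b ^ 2) N j := by
        ring
    _ = poch (b ^ 2) (b ^ 2) j * poch (b ^ 2) (b ^ 2) (N - j) * G (b ^ 2) N j := by
        rw [poch_sq, poch_sq]
    _ = poch (b ^ 2) (b ^ 2) N := h2
    _ = poch b b N * npoch b b N := poch_sq b N
    _ = poch b b N * (npoch b b j * npoch (b ^ (j + 1)) b (N - j)) := by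
        rw [← npoch_split b hj]
    _ = (poch b b j * poch b b (N - j) * G b N j)
          * (npoch b b j * npoch (b ^ (j + 1)) b (N - j)) := by rw [h1]
    _ = poch b b j * poch b b (N - j) * npoch b b j * (G b N j * npoch (b ^ (j + 1)) b (N - j)) := by
        ring

lemma cho_add (j : ℕ) : ∀ m, (j + m + 1).choose 2
    = (j + 1).choose 2 + (m.choose 2 + m * (j + 1)) := by
  intro m
  induction m with
  | zero => simp
  | succ m ih =>
    have h1 : j + (m + 1) + 1 = (j + m + 1) + 1 := by omega
    rw [h1, cho1, ih, cho1 m]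
    ring

lemma key (N : ℕ) :
    ∑ n ∈ range (N + 1), poch (x * q) (q ^ 2) n * q ^ n * G (q ^ 2) N n
      = ∑ n ∈ range (N + 1), poch (x * q) q n * q ^ (n * (n + 1) / 2) * G q N n := by
  have hq : cC q = 0 := MvPowerSeries.constantCoeff_X 0
  have hq2 : cC (q ^ 2) = 0 := by rw [map_pow, hq]; exact zero_pow (by omega)
  have hcho : ∀ n : ℕ, n * (n + 1) / 2 = (n + 1).choose 2 := by
    intro n
    rw [Nat.choose_two_right, Nat.add_sub_cancel, Nat.mul_comm]
  -- expand LHS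
  have hL : ∀ n ∈ range (N + 1), poch (x * q) (q ^ 2) n * q ^ n * G (q ^ 2) N n
      = ∑ j ∈ range (N + 1),
          G (q ^ 2) n j * (-(x * q)) ^ j * (q ^ 2) ^ (j.choose 2) * q ^ n * G (q ^ 2) N n := by
    intro n hn
    rw [mem_range] at hn
    rw [poch_binom (x * q) (q ^ 2) n, sum_mul, sum_mul]
    refine sum_subset (range_subset_range.2 (by omega)) ?_
    intro j _ hj'
    rw [mem_range, not_lt] at hj'
    rw [G_eq_zero _ n j (by omega)]
    ring
  have hR : ∀ n ∈ range (N + 1), poch (x * q) q n * q ^ (n * (n + 1) / 2) * G q N n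
      = ∑ j ∈ range (N + 1),
          G q n j * (-(x * q)) ^ j * q ^ (j.choose 2) * q ^ ((n + 1).choose 2) * G q N n := by
    intro n hn
    rw [mem_range] at hn
    rw [hcho n, poch_binom (x * q) q n, sum_mul, sum_mul]
    refine sum_subset (range_subset_range.2 (by omega)) ?_
    intro j _ hj'
    rw [mem_range, not_lt] at hj'
    rw [G_eq_zero _ n j (by omega)]
    ring
  rw [sum_congr rfl hL, sum_congr rfl hR, sum_comm]
  conv_rhs => rw [sum_comm]
  apply sum_congr rfl
  intro j hj
  rw [mem_range] at hj
  have hjN : j ≤ N := by omega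
  -- inner sums
  have e1 : N + 1 = j + (N + 1 - j) := by omega
  have hI2 : ∑ n ∈ range (N + 1),
      G (q ^ 2) n j * (-(x * q)) ^ j * (q ^ 2) ^ (j.choose 2) * q ^ n * G (q ^ 2) N n
      = (-(x * q)) ^ j * (q ^ 2) ^ (j.choose 2) * q ^ j
        * (G (q ^ 2) N j * npoch q q (N - j)) := by
    rw [e1, sum_range_add]
    have hz : ∀ i ∈ range j,
        G (q ^ 2) i j * (-(x * q)) ^ j * (q ^ 2) ^ (j.choose 2) * q ^ i * G (q ^ 2) N i = 0 := by
      intro i hi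
      rw [mem_range] at hi
      rw [G_eq_zero _ i j (by omega)]
      ring
    rw [sum_congr rfl hz, sum_const_zero, zero_add]
    have hm : ∀ m ∈ range (N + 1 - j),
        G (q ^ 2) (j + m) j * (-(x * q)) ^ j * (q ^ 2) ^ (j.choose 2) * q ^ (j + m)
            * G (q ^ 2) N (j + m)
          = ((-(x * q)) ^ j * (q ^ 2) ^ (j.choose 2) * q ^ j * G (q ^ 2) N j)
            * (q ^ m * G (q ^ 2) (N - j) m) := by
      intro m hm
      rw [mem_range] at hm
      have htri := G_tri hq2 (N := N) (n := j + m) (j := j) (by omega) (by omega)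
      have e2 : j + m - j = m := by omega
      rw [e2] at htri
      rw [pow_add]
      linear_combination ((-(x * q)) ^ j * (q ^ 2) ^ (j.choose 2) * q ^ j * q ^ m) * htri
    rw [sum_congr rfl hm, ← mul_sum]
    have e5 : N + 1 - j = (N - j) + 1 := by omega
    rw [e5, sum_G_sq hq (N - j)]
    ring
  have hI1 : ∑ n ∈ range (N + 1),
      G q n j * (-(x * q)) ^ j * q ^ (j.choose 2) * q ^ ((n + 1).choose 2) * G q N n
      = (-(x * q)) ^ j * q ^ (j.choose 2) * q ^ ((j + 1).choose 2)
        * (G q N j * npoch (q ^ (j + 1)) q (N - j)) := by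
    rw [e1, sum_range_add]
    have hz : ∀ i ∈ range j,
        G q i j * (-(x * q)) ^ j * q ^ (j.choose 2) * q ^ ((i + 1).choose 2) * G q N i = 0 := by
      intro i hi
      rw [mem_range] at hi
      rw [G_eq_zero _ i j (by omega)]
      ring
    rw [sum_congr rfl hz, sum_const_zero, zero_add]
    have hm : ∀ m ∈ range (N + 1 - j),
        G q (j + m) j * (-(x * q)) ^ j * q ^ (j.choose 2) * q ^ ((j + m + 1).choose 2)
            * G q N (j + m)
          = ((-(x * q)) ^ j * q ^ (j.choose 2) * q ^ ((j + 1).choose 2) * G q N j)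
            * (G q (N - j) m * (q ^ (j + 1)) ^ m * q ^ (m.choose 2)) := by
      intro m hm
      rw [mem_range] at hm
      have htri := G_tri hq (N := N) (n := j + m) (j := j) (by omega) (by omega)
      have e2 : j + m - j = m := by omega
      rw [e2] at htri
      rw [cho_add j m, pow_add, pow_add, ← pow_mul]
      linear_combination ((-(x * q)) ^ j * q ^ (j.choose 2) * q ^ ((j + 1).choose 2)
        * q ^ (m.choose 2) * q ^ (m * (j + 1))) * htri
    rw [sum_congr rfl hm, ← mul_sum]
    have e5 : N + 1 - j = (N - j) + 1 := by omega
    rw [e5, G_binom q (N - j) (q ^ (j + 1))]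
    ring
  rw [hI2, hI1]
  have hk := key2 hq hjN
  have e6 : (q ^ 2) ^ (j.choose 2) = q ^ (j.choose 2) * q ^ (j.choose 2) := by
    rw [← pow_add, ← pow_mul]
    congr 1
    omega
  rw [e6, cho1 j, pow_add]
  linear_combination ((-(x * q)) ^ j * q ^ (j.choose 2) * q ^ (j.choose 2) * q ^ j) * hk

noncomputable instance : T2Space (MvPowerSeries (Fin 3) ℚ) :=
  inferInstanceAs (T2Space ((Fin 3 →₀ ℕ) → ℚ))
noncomputable instance : IsTopologicalAddGroup (MvPowerSeries (Fin 3) ℚ) :=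
  inferInstanceAs (IsTopologicalAddGroup ((Fin 3 →₀ ℕ) → ℚ))

/-- The subring of series not involving `t`. -/
noncomputable def TFS : Subring R where
  carrier := {g : R | ∀ d : Fin 3 →₀ ℕ, d 1 ≠ 0 → cf d g = 0}
  zero_mem' := by intro d _; simp
  one_mem' := by
    intro d hd
    rw [MvPowerSeries.coeff_one]
    rw [if_neg]
    intro h
    exact hd (by rw [h]; rfl)
  add_mem' := by
    intro a b ha hb d hd
    rw [map_add, ha d hd, hb d hd, add_zero]
  neg_mem' := by
    intro a ha d hd
    rw [map_neg, ha d hd, neg_zero]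
  mul_mem' := by
    intro a b ha hb d hd
    rw [MvPowerSeries.coeff_mul]
    apply Finset.sum_eq_zero
    intro p hp
    rw [HasAntidiagonal.mem_antidiagonal] at hp
    have : p.1 1 + p.2 1 = d 1 := by rw [← hp]; rfl
    rcases Nat.eq_zero_or_pos (p.1 1) with h1 | h1
    · rw [hb p.2 (by omega), mul_zero]
    · rw [ha p.1 (by omega), zero_mul]

lemma q_mem_TFS : q ∈ TFS := by
  intro d hd
  rw [q, MvPowerSeries.coeff_X, if_neg]
  intro h
  rw [h] at hd
  exact hd (by simp [Finsupp.single_apply])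

lemma x_mem_TFS : x ∈ TFS := by
  intro d hd
  rw [x, MvPowerSeries.coeff_X, if_neg]
  intro h
  rw [h] at hd
  exact hd (by simp [Finsupp.single_apply])

lemma G_mem_TFS {b : R} (hb : b ∈ TFS) : ∀ N k, G b N k ∈ TFS := by
  intro N
  induction N with
  | zero =>
    intro k
    match k with
    | 0 => exact one_mem TFS
    | k + 1 => exact zero_mem TFS
  | succ N ih =>
    intro k
    match k with
    | 0 => exact one_mem TFS
    | k + 1 =>
      rw [G_pascal]
      exact add_mem (ih k) (mul_mem (pow_mem hb (k+1)) (ih (k+1)))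

lemma poch_mem_TFS {a b : R} (ha : a ∈ TFS) (hb : b ∈ TFS) (n : ℕ) : poch a b n ∈ TFS := by
  apply prod_mem
  intro k _
  exact sub_mem (one_mem TFS) (mul_mem ha (pow_mem hb k))

lemma coeff_mul_tpow (g : R) (m : ℕ) (d : Fin 3 →₀ ℕ) :
    cf d (g * t ^ m) =
      if m ≤ d 1 then cf (d - Finsupp.single 1 m) g else 0 := by
  rw [t, MvPowerSeries.X_pow_eq, MvPowerSeries.coeff_mul_monomial]
  simp [Finsupp.single_le_iff]

lemma coeff_tgraded {g : R} (hg : g ∈ TFS) (m : ℕ) (d : Fin 3 →₀ ℕ) (hm : m ≠ d 1) :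
    cf d (g * t ^ m) = 0 := by
  rw [coeff_mul_tpow]
  split
  · next h =>
    apply hg
    rw [Finsupp.tsub_apply, Finsupp.single_eq_same]
    omega
  · rfl

/-- The sum `∑ c m * t^m` of a `t`-graded family, defined coefficientwise. -/
noncomputable def Ser (c : ℕ → R) : R := fun d => cf d (c (d 1) * t ^ (d 1))

lemma coeff_Ser (c : ℕ → R) (d : Fin 3 →₀ ℕ) :
    cf d (Ser c) = cf d (c (d 1) * t ^ (d 1)) := rfl

lemma hasSum_Ser {c : ℕ → R} (hc : ∀ m, c m ∈ TFS) :
    HasSum (fun m => c m * t ^ m) (Ser c) := by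
  refine Pi.hasSum.2 fun d => ?_
  exact hasSum_single (d 1) fun m hm => coeff_tgraded (hc m) m d hm

lemma cont_mulLeft (A : R) : Continuous (fun F : R => A * F) := by
  have h : (fun F : R => A * F) = fun F => (fun d => ∑ p ∈ antidiagonal d,
      cf p.1 A * cf p.2 F : R) := by
    funext F
    exact MvPowerSeries.ext fun d => MvPowerSeries.coeff_mul d A F
  rw [h]
  apply continuous_pi
  intro d
  exact continuous_finset_sum _ fun p _ => continuous_const.mul (continuous_apply p.2)

lemma mulSer (A : R) (hA : A ∈ TFS) {c : ℕ → R} (hc : ∀ m, c m ∈ TFS) :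
    A * Ser c = Ser (fun m => A * c m) := by
  have h2 := (hasSum_Ser hc).map (AddMonoidHom.mulLeft A) (cont_mulLeft A)
  have h3 := hasSum_Ser (c := fun m => A * c m) (fun m => mul_mem hA (hc m))
  have h2' : HasSum (fun m => A * (c m * t ^ m)) (A * Ser c) := h2
  have e : (fun m => (A * c m) * t ^ m) = fun m => A * (c m * t ^ m) := by
    funext m
    ring
  rw [e] at h3
  exact h2'.unique h3

/-- shift a sequence: `shiftc c = (0, c 0, c 1, ...)`. -/
def shiftc (c : ℕ → R) : ℕ → R := fun m => match m with | 0 => 0 | m + 1 => c m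

lemma tmulSer {c : ℕ → R} (hc : ∀ m, c m ∈ TFS) :
    t * Ser c = Ser (shiftc c) := by
  have h2 := (hasSum_Ser hc).map (AddMonoidHom.mulLeft t) (cont_mulLeft t)
  have hsh : ∀ m, shiftc c m ∈ TFS := by
    intro m
    match m with
    | 0 => exact zero_mem TFS
    | m + 1 => exact hc m
  have h3 := hasSum_Ser hsh
  have h4 := (hasSum_nat_add_iff (f := fun m => shiftc c m * t ^ m) 1).2 (by
    simpa [shiftc] using h3)
  have h2' : HasSum (fun m => t * (c m * t ^ m)) (t * Ser c) := h2
  have e : (fun n => shiftc c (n + 1) * t ^ (n + 1)) = fun m => t * (c m * t ^ m) := by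
    funext m
    show c m * t ^ (m + 1) = _
    rw [pow_succ']
    ring
  rw [e] at h4
  exact h2'.unique h4

lemma Ser_sub (c e : ℕ → R) : Ser c - Ser e = Ser (fun m => c m - e m) := by
  apply MvPowerSeries.ext
  intro d
  rw [map_sub, coeff_Ser, coeff_Ser, coeff_Ser, sub_mul, map_sub]

lemma Ser_congr {c e : ℕ → R} (h : ∀ m, c m = e m) : Ser c = Ser e := by
  have : c = e := funext h
  rw [this]

/-- the inverse of `(t;b)_{n+1}` as an explicit `t`-graded series. -/
noncomputable def Sinv (b : R) (n : ℕ) : R := Ser (fun m => G b (m + n) n)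

lemma poch_mul_Sinv {b : R} (hb : b ∈ TFS) (n : ℕ) :
    poch t b (n + 1) * Sinv b n = 1 := by
  have hGm : ∀ n m, G b (m + n) n ∈ TFS := fun n m => G_mem_TFS hb _ _
  have hstep : ∀ n : ℕ, (1 - t * b ^ (n + 1)) * Sinv b (n + 1) = Sinv b n := by
    intro n
    have h1 : (1 - t * b ^ (n + 1)) * Sinv b (n + 1)
        = Sinv b (n + 1) - t * (b ^ (n + 1) * Sinv b (n + 1)) := by ring
    rw [h1]
    simp only [Sinv]
    rw [mulSer (b ^ (n + 1)) (pow_mem hb (n + 1)) (hGm (n + 1)),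
      tmulSer (fun m => mul_mem (pow_mem hb (n + 1)) (hGm (n + 1) m)), Ser_sub]
    apply Ser_congr
    intro m
    match m with
    | 0 =>
      simp only [Nat.zero_add]
      show G b (n + 1) (n + 1) - 0 = G b n n
      rw [G_self, G_self, sub_zero]
    | m + 1 =>
      show G b (m + 1 + (n + 1)) (n + 1) - b ^ (n + 1) * G b (m + (n + 1)) (n + 1)
          = G b (m + 1 + n) n
      have e1 : m + 1 + (n + 1) = (m + 1 + n) + 1 := by omega
      have e2 : m + (n + 1) = m + 1 + n := by omega
      rw [e1, e2, G_pascal]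
      ring
  have hbase : (1 - t * b ^ 0) * Sinv b 0 = 1 := by
    have h1 : (1 - t * b ^ 0) * Sinv b 0 = Sinv b 0 - t * Sinv b 0 := by ring
    rw [h1, Sinv, tmulSer (hGm 0), Ser_sub]
    apply MvPowerSeries.ext
    intro d
    rw [coeff_Ser]
    rcases Nat.eq_zero_or_pos (d 1) with h | h
    · rw [h]
      show cf d ((G b 0 0 - shiftc _ 0) * 1) = _
      rw [G_zero_right]
      show cf d ((1 - 0) * 1) = _
      norm_num
    · obtain ⟨k, hk⟩ : ∃ k, d 1 = k + 1 := ⟨d 1 - 1, by omega⟩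
      rw [hk]
      show cf d ((G b (k + 1 + 0) 0 - G b (k + 0) 0) * t ^ (k + 1)) = cf d 1
      rw [G_zero_right, G_zero_right, sub_self, zero_mul, map_zero,
        MvPowerSeries.coeff_one, if_neg]
      intro h0
      rw [h0] at h
      simp at h
  induction n with
  | zero =>
    rw [poch_succ]
    simpa using hbase
  | succ n ih =>
    rw [poch_succ, mul_assoc, hstep n]
    exact ih

lemma constC_t : cC t = 0 := MvPowerSeries.constantCoeff_X 1

lemma inv_eq_Sinv {b : R} (hb : b ∈ TFS) (n : ℕ) :
    (poch t b (n + 1))⁻¹ = Sinv b n := by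
  rw [MvPowerSeries.inv_eq_iff_mul_eq_one
      (by rw [constC_poch b constC_t]; exact one_ne_zero)]
  rw [mul_comm]
  exact poch_mul_Sinv hb n

/-- sum of a family whose `n`-th term is divisible by `t^n`, coefficientwise. -/
noncomputable def SerB (f : ℕ → R) : R := fun d => ∑ n ∈ range (d 1 + 1), cf d (f n)

lemma coeff_SerB (f : ℕ → R) (d : Fin 3 →₀ ℕ) :
    cf d (SerB f) = ∑ n ∈ range (d 1 + 1), cf d (f n) := rfl

lemma hasSum_SerB {f : ℕ → R} (hf : ∀ (d : Fin 3 →₀ ℕ) n, d 1 < n → cf d (f n) = 0) :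
    HasSum f (SerB f) := by
  refine Pi.hasSum.2 fun d => ?_
  exact hasSum_sum_of_ne_finset_zero (s := range (d 1 + 1))
    (fun n hn => hf d n (by simpa using hn))

lemma coeff_term {b : R} (hb : b ∈ TFS) {A : R} (hA : A ∈ TFS) (d : Fin 3 →₀ ℕ)
    {n : ℕ} (hn : n ≤ d 1) :
    cf d ((A * Sinv b n) * t ^ n)
      = cf (d - Finsupp.single 1 (d 1)) (A * G b (d 1) n) := by
  rw [coeff_mul_tpow, if_pos hn]
  rw [Sinv, mulSer A hA (fun m => G_mem_TFS hb _ _), coeff_Ser]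
  have hd' : ((d - Finsupp.single 1 n : Fin 3 →₀ ℕ)) 1 = d 1 - n := by
    rw [Finsupp.tsub_apply, Finsupp.single_eq_same]
  rw [hd']
  have e : d 1 - n + n = d 1 := by omega
  rw [e, coeff_mul_tpow, hd', if_pos (le_refl _)]
  have e2 : Finsupp.single (1 : Fin 3) n + Finsupp.single 1 (d 1 - n)
      = Finsupp.single 1 (d 1) := by
    rw [← Finsupp.single_add]
    congr 1
    omega
  rw [tsub_tsub, e2]

lemma tsum_side {b : R} (hb : b ∈ TFS) (A : ℕ → R) :
    ∑' n, (A n * Sinv b n) * t ^ n = SerB (fun n => (A n * Sinv b n) * t ^ n) := by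
  apply HasSum.tsum_eq
  apply hasSum_SerB
  intro d n hdn
  rw [coeff_mul_tpow, if_neg (by omega)]


/-- Lemma 3, a transformation of Andrews. -/
theorem andrews_transformation :
    ∑' n : ℕ, poch (x * q) (q ^ 2) n * (poch t (q ^ 2) (n + 1))⁻¹ * (t * q) ^ n
      = ∑' n : ℕ, poch (x * q) q n * t ^ n * q ^ (n * (n + 1) / 2)
          * (poch t q (n + 1))⁻¹ := by
  have hqT : q ∈ TFS := q_mem_TFS
  have hq2T : q ^ 2 ∈ TFS := pow_mem hqT 2
  have hxqT : x * q ∈ TFS := mul_mem x_mem_TFS hqT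
  have hA2 : ∀ n : ℕ, poch (x * q) (q ^ 2) n * q ^ n ∈ TFS :=
    fun n => mul_mem (poch_mem_TFS hxqT hq2T n) (pow_mem hqT n)
  have hA1 : ∀ n : ℕ, poch (x * q) q n * q ^ (n * (n + 1) / 2) ∈ TFS :=
    fun n => mul_mem (poch_mem_TFS hxqT hqT n) (pow_mem hqT _)
  have hfun1 : (fun n : ℕ => poch (x * q) (q ^ 2) n * (poch t (q ^ 2) (n + 1))⁻¹ * (t * q) ^ n)
      = fun n => ((poch (x * q) (q ^ 2) n * q ^ n) * Sinv (q ^ 2) n) * t ^ n := by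
    funext n
    rw [inv_eq_Sinv hq2T n, mul_pow]
    ring
  have hfun2 : (fun n : ℕ => poch (x * q) q n * t ^ n * q ^ (n * (n + 1) / 2)
        * (poch t q (n + 1))⁻¹)
      = fun n => ((poch (x * q) q n * q ^ (n * (n + 1) / 2)) * Sinv q n) * t ^ n := by
    funext n
    rw [inv_eq_Sinv hqT n]
    ring
  rw [hfun1, hfun2, tsum_side hq2T _, tsum_side hqT _]
  apply MvPowerSeries.ext
  intro d
  rw [coeff_SerB, coeff_SerB]
  have h1 : ∀ n ∈ range (d 1 + 1),
      cf d (((poch (x * q) (q ^ 2) n * q ^ n) * Sinv (q ^ 2) n) * t ^ n)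
        = cf (d - Finsupp.single 1 (d 1))
            (poch (x * q) (q ^ 2) n * q ^ n * G (q ^ 2) (d 1) n) := by
    intro n hn
    rw [mem_range] at hn
    exact coeff_term hq2T (hA2 n) d (by omega)
  have h2 : ∀ n ∈ range (d 1 + 1),
      cf d (((poch (x * q) q n * q ^ (n * (n + 1) / 2)) * Sinv q n) * t ^ n)
        = cf (d - Finsupp.single 1 (d 1))
            (poch (x * q) q n * q ^ (n * (n + 1) / 2) * G q (d 1) n) := by
    intro n hn
    rw [mem_range] at hn
    exact coeff_term hqT (hA1 n) d (by omega)
  rw [sum_congr rfl h1, sum_congr rfl h2, ← map_sum, ← map_sum, key (d 1)]
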